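/- With the same setup as the collision estimator, the variance of g̃ satisfies Var(g̃) ≤ (2/m²) E[g̃] + (4/m) Σ_{i=0}^{d−1} p_i³. -/

import Mathlib

open MeasureTheory ProbabilityTheory

set_option maxHeartbeats 1600000 in
/-- With the collision-estimator setup, the variance satisfies
Var(g̃) ≤ (2/m²) E[g̃] + (4/m) Σ_i p_i³. -/
theorem stmt6 {Ω : Type*} [MeasurableSpace Ω] (μ : Measure Ω) [IsProbabilityMeasure μ]
    (d m : ℕ) (hd : 0 < d) (hm : 1 ≤ m)
    (p : Fin d → ℝ) (hp : ∀ i, 0 ≤ p i) (hpsum : ∑ i, p i = 1)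
    (x : Fin m → Ω → Fin d) (hmeas : ∀ j, Measurable (x j))
    (hindep : iIndepFun x μ)
    (hdist : ∀ j i, μ {ω | x j ω = i} = ENNReal.ofReal (p i))
    (g : Ω → ℝ)
    (hg : g = fun ω => (1 : ℝ) / m ^ 2 *
        ∑ i : Fin d, (∑ j : Fin m, if x j ω = i then (1 : ℝ) else 0) ^ 2 - 1 / m) :
    variance g μ ≤ 2 / m ^ 2 * ∫ ω, g ω ∂μ + 4 / m * ∑ i, p i ^ 3 := by
  classical
  have hmpos : (0:ℝ) < m := by exact_mod_cast hm
  set α : ℝ := ∑ i, p i ^ 2 with hα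
  set β : ℝ := ∑ i, p i ^ 3 with hβ
  have hα0 : 0 ≤ α := Finset.sum_nonneg fun i _ => pow_nonneg (hp i) _
  have hβ0 : 0 ≤ β := Finset.sum_nonneg fun i _ => pow_nonneg (hp i) _
  -- the collision indicators
  set Z : Fin m × Fin m → Ω → ℝ :=
    (fun q ω => if x q.1 ω = x q.2 ω then (1:ℝ) else 0) with hZ
  set D : Finset (Fin m × Fin m) := Finset.univ.offDiag with hD
  have hDmem : ∀ q : Fin m × Fin m, q ∈ D ↔ q.1 ≠ q.2 := by
    intro q; simp [hD, Finset.mem_offDiag]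
  have hDcard : D.card = m * m - m := by
    simp [hD, Finset.offDiag_card]
  set T : Ω → ℝ := ∑ q ∈ D, Z q with hT
  -- basic set lemmas
  have hsetmeas : ∀ (j : Fin m) (i : Fin d), MeasurableSet {ω | x j ω = i} :=
    fun j i => (hmeas j) (measurableSet_singleton i)
  have hInterMeas : ∀ (S : Finset (Fin m)) (v : Fin m → Fin d),
      MeasurableSet (⋂ j ∈ S, {ω | x j ω = v j}) :=
    fun S v => MeasurableSet.biInter (S.countable_toSet) fun j _ => hsetmeas j (v j)
  -- product of indicators as an indicator
  have hprod_ind : ∀ (S : Finset (Fin m)) (v : Fin m → Fin d),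
      (fun ω => ∏ j ∈ S, (if x j ω = v j then (1:ℝ) else 0)) =
        Set.indicator (⋂ j ∈ S, {ω | x j ω = v j}) (fun _ => (1:ℝ)) := by
    intro S v
    funext ω
    by_cases h : ω ∈ ⋂ j ∈ S, {ω | x j ω = v j}
    · simp only [Set.mem_iInter, Set.mem_setOf_eq] at h
      rw [Set.indicator_of_mem (by simpa [Set.mem_iInter] using h)]
      exact Finset.prod_eq_one fun j hj => by simp [h j hj]
    · rw [Set.indicator_of_notMem h]
      simp only [Set.mem_iInter, Set.mem_setOf_eq, not_forall] at h
      obtain ⟨j, hj, hne⟩ := h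
      exact Finset.prod_eq_zero hj (by simp [hne])
  have hprod_integrable : ∀ (S : Finset (Fin m)) (v : Fin m → Fin d),
      Integrable (fun ω => ∏ j ∈ S, (if x j ω = v j then (1:ℝ) else 0)) μ := by
    intro S v
    rw [hprod_ind S v]
    exact (integrable_const (1:ℝ)).indicator (hInterMeas S v)
  -- the key independence computation
  have int_ind : ∀ (S : Finset (Fin m)) (v : Fin m → Fin d),
      ∫ ω, (∏ j ∈ S, (if x j ω = v j then (1:ℝ) else 0)) ∂μ = ∏ j ∈ S, p (v j) := by
    intro S v
    rw [hprod_ind S v, integral_indicator_const (1:ℝ) (hInterMeas S v), smul_eq_mul, mul_one]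
    have hpre : ∀ j : Fin m, {ω | x j ω = v j} = x j ⁻¹' {v j} := by
      intro j; ext ω; simp
    have := hindep.measure_inter_preimage_eq_mul S
      (sets := fun j => ({v j} : Set (Fin d))) (fun i _ => measurableSet_singleton _)
    simp only [← hpre] at this
    rw [measureReal_def, this, ENNReal.toReal_prod]
    refine Finset.prod_congr rfl fun j _ => ?_
    rw [hdist j (v j), ENNReal.toReal_ofReal (hp _)]
  -- pointwise expansion of Z as a sum over values
  have hZsum : ∀ (j k : Fin m) (ω : Ω),
      Z (j, k) ω = ∑ i, (if x j ω = i then (1:ℝ) else 0) * (if x k ω = i then 1 else 0) := by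
    intro j k ω
    have : ∀ i : Fin d, (if x j ω = i then (1:ℝ) else 0) * (if x k ω = i then 1 else 0)
        = if i = x j ω then (if x k ω = i then (1:ℝ) else 0) else 0 := by
      intro i
      by_cases h : x j ω = i
      · rw [if_pos h, one_mul, if_pos h.symm]
      · rw [if_neg h, zero_mul, if_neg (Ne.symm h)]
    rw [Finset.sum_congr rfl fun i _ => this i, Finset.sum_ite_eq']
    by_cases h : x j ω = x k ω
    · simp [hZ, h]
    · simp [hZ, h, Ne.symm h]
  -- symmetry of Z
  have hZsymm : ∀ j k : Fin m, Z (j, k) = Z (k, j) := by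
    intro j k; funext ω; simp only [hZ]
    by_cases h : x j ω = x k ω
    · simp [h]
    · simp [h, Ne.symm h]
  -- integral of a single Z
  have EZ : ∀ j k : Fin m, j ≠ k → ∫ ω, Z (j, k) ω ∂μ = α := by
    intro j k hjk
    have expand : ∀ ω : Ω, Z (j, k) ω
        = ∑ i, ∏ t ∈ ({j, k} : Finset (Fin m)), (if x t ω = i then (1:ℝ) else 0) := by
      intro ω
      rw [hZsum j k ω]
      exact Finset.sum_congr rfl fun i _ => by rw [Finset.prod_pair hjk]
    calc ∫ ω, Z (j, k) ω ∂μ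
        = ∫ ω, ∑ i, ∏ t ∈ ({j, k} : Finset (Fin m)), (if x t ω = i then (1:ℝ) else 0) ∂μ := by
          exact integral_congr_ae (Filter.Eventually.of_forall expand)
      _ = ∑ i, ∫ ω, ∏ t ∈ ({j, k} : Finset (Fin m)), (if x t ω = i then (1:ℝ) else 0) ∂μ := by
          exact integral_finset_sum _ fun i _ => hprod_integrable _ _
      _ = ∑ i : Fin d, p i ^ 2 := by
          refine Finset.sum_congr rfl fun i _ => ?_
          rw [int_ind ({j, k} : Finset (Fin m)) (fun _ => i), Finset.prod_pair hjk, sq]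
  -- integral of a product of two Z sharing one index
  have EZZ3 : ∀ s a b : Fin m, s ≠ a → s ≠ b → a ≠ b →
      ∫ ω, Z (s, a) ω * Z (s, b) ω ∂μ = β := by
    intro s a b hsa hsb hab
    have expand : ∀ ω : Ω, Z (s, a) ω * Z (s, b) ω
        = ∑ i, ∏ t ∈ ({s, a, b} : Finset (Fin m)), (if x t ω = i then (1:ℝ) else 0) := by
      intro ω
      have h1 : ∀ i : Fin d, ∏ t ∈ ({s, a, b} : Finset (Fin m)), (if x t ω = i then (1:ℝ) else 0)
          = (if x s ω = i then (1:ℝ) else 0) * ((if x a ω = i then (1:ℝ) else 0)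
            * (if x b ω = i then (1:ℝ) else 0)) := by
        intro i
        rw [Finset.prod_insert (by simp [hsa, hsb]), Finset.prod_pair hab]
      rw [Finset.sum_congr rfl fun i _ => h1 i]
      by_cases ha : x s ω = x a ω
      · by_cases hb : x s ω = x b ω
        · have : ∀ i : Fin d, (if x s ω = i then (1:ℝ) else 0) * ((if x a ω = i then (1:ℝ) else 0)
              * (if x b ω = i then (1:ℝ) else 0)) = if i = x s ω then (1:ℝ) else 0 := by
            intro i
            by_cases h : x s ω = i
            · rw [if_pos h, if_pos (ha.symm.trans h), if_pos (hb.symm.trans h), if_pos h.symm]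
              norm_num
            · rw [if_neg h, if_neg (Ne.symm h)]; ring
          rw [Finset.sum_congr rfl fun i _ => this i, Finset.sum_ite_eq']
          simp only [Finset.mem_univ, if_true, hZ]
          rw [if_pos ha, if_pos hb]; norm_num
        · have : ∀ i : Fin d, (if x s ω = i then (1:ℝ) else 0) * ((if x a ω = i then (1:ℝ) else 0)
              * (if x b ω = i then (1:ℝ) else 0)) = 0 := by
            intro i
            by_cases h : x s ω = i
            · have hbi : ¬ (x b ω = i) := fun hc => hb (h.trans hc.symm)
              rw [if_neg hbi]; ring
            · rw [if_neg h]; ring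
          rw [Finset.sum_congr rfl fun i _ => this i, Finset.sum_const_zero]
          simp only [hZ]
          rw [if_neg hb]; ring
      · have : ∀ i : Fin d, (if x s ω = i then (1:ℝ) else 0) * ((if x a ω = i then (1:ℝ) else 0)
            * (if x b ω = i then (1:ℝ) else 0)) = 0 := by
          intro i
          by_cases h : x s ω = i
          · have hai : ¬ (x a ω = i) := fun hc => ha (h.trans hc.symm)
            rw [if_neg hai]; ring
          · rw [if_neg h]; ring
        rw [Finset.sum_congr rfl fun i _ => this i, Finset.sum_const_zero]
        simp only [hZ]
        rw [if_neg ha]; ring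
    calc ∫ ω, Z (s, a) ω * Z (s, b) ω ∂μ
        = ∫ ω, ∑ i, ∏ t ∈ ({s, a, b} : Finset (Fin m)), (if x t ω = i then (1:ℝ) else 0) ∂μ :=
          integral_congr_ae (Filter.Eventually.of_forall expand)
      _ = ∑ i, ∫ ω, ∏ t ∈ ({s, a, b} : Finset (Fin m)), (if x t ω = i then (1:ℝ) else 0) ∂μ :=
          integral_finset_sum _ fun i _ => hprod_integrable _ _
      _ = ∑ i : Fin d, p i ^ 3 := by
          refine Finset.sum_congr rfl fun i _ => ?_
          rw [int_ind ({s, a, b} : Finset (Fin m)) (fun _ => i),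
            Finset.prod_insert (by simp [hsa, hsb]), Finset.prod_pair hab]
          ring
  -- integrability of Z and products
  have hAmeas : ∀ q : Fin m × Fin m, MeasurableSet {ω | x q.1 ω = x q.2 ω} := by
    intro q
    have : {ω | x q.1 ω = x q.2 ω} = ⋃ i, ({ω | x q.1 ω = i} ∩ {ω | x q.2 ω = i}) := by
      ext ω
      simp only [Set.mem_setOf_eq, Set.mem_iUnion, Set.mem_inter_iff]
      constructor
      · intro h; exact ⟨x q.2 ω, h, rfl⟩
      · rintro ⟨i, h1, h2⟩; exact h1.trans h2.symm
    rw [this]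
    exact MeasurableSet.iUnion fun i => (hsetmeas _ i).inter (hsetmeas _ i)
  have hZind : ∀ q : Fin m × Fin m,
      Z q = Set.indicator {ω | x q.1 ω = x q.2 ω} (fun _ => (1:ℝ)) := by
    intro q; funext ω
    by_cases h : x q.1 ω = x q.2 ω
    · simp [hZ, h, Set.indicator_of_mem, Set.mem_setOf_eq]
    · simp [hZ, h, Set.indicator_of_notMem, Set.mem_setOf_eq]
  have hZint : ∀ q : Fin m × Fin m, Integrable (Z q) μ := by
    intro q
    rw [hZind q]
    exact (integrable_const (1:ℝ)).indicator (hAmeas q)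
  have hZmeas : ∀ q : Fin m × Fin m, Measurable (Z q) := by
    intro q
    rw [hZind q]
    exact (measurable_const.indicator (hAmeas q))
  have hZZint : ∀ q q' : Fin m × Fin m, Integrable (fun ω => Z q ω * Z q' ω) μ := by
    intro q q'
    have hb : ∀ ω, ‖Z q ω * Z q' ω‖ ≤ ‖Z q ω‖ := by
      intro ω
      rw [norm_mul]
      have h1 : ‖Z q' ω‖ ≤ 1 := by
        simp only [hZ]
        by_cases h : x q'.1 ω = x q'.2 ω <;> simp [h]
      nlinarith [norm_nonneg (Z q ω), norm_nonneg (Z q' ω)]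
    exact Integrable.mono (hZint q) ((hZmeas q).mul (hZmeas q')).aestronglyMeasurable
      (Filter.Eventually.of_forall hb)
  -- integral of a product of two Z with all four indices distinct
  have EZZ4 : ∀ j k j' k' : Fin m, j ≠ k → j' ≠ k' → j ≠ j' → j ≠ k' → k ≠ j' → k ≠ k' →
      ∫ ω, Z (j, k) ω * Z (j', k') ω ∂μ = α * α := by
    intro j k j' k' hjk hj'k' h1 h2 h3 h4
    have hφ : Measurable (fun y : Fin d × Fin d => if y.1 = y.2 then (1:ℝ) else 0) :=
      Measurable.of_discrete
    have hpair : IndepFun (fun ω => (x j ω, x k ω)) (fun ω => (x j' ω, x k' ω)) μ :=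
      hindep.indepFun_prodMk_prodMk hmeas j k j' k' h1 h2 h3 h4
    have hcomp : IndepFun (Z (j, k)) (Z (j', k')) μ :=
      hpair.comp hφ hφ
    have hmul := hcomp.integral_mul_eq_mul_integral (hZint (j, k)).aestronglyMeasurable (hZint (j', k')).aestronglyMeasurable
    have : ∫ ω, Z (j, k) ω * Z (j', k') ω ∂μ = ∫ ω, (Z (j, k) * Z (j', k')) ω ∂μ := rfl
    rw [this, hmul, EZ j k hjk, EZ j' k' hj'k']
  have hαα : 0 ≤ α * α := mul_nonneg hα0 hα0
  have hZsq : ∀ q : Fin m × Fin m, (fun ω => Z q ω * Z q ω) = Z q := by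
    intro q; funext ω
    by_cases h : x q.1 ω = x q.2 ω <;> simp [hZ, h]
  -- key per-pair covariance bound
  have key_term : ∀ q ∈ D, ∀ q' ∈ D,
      ∫ ω, Z q ω * Z q' ω ∂μ - α * α ≤
        (if q' = q then α else 0) + (if q' = (q.2, q.1) then α else 0) +
        (if q'.1 = q.1 ∨ q'.1 = q.2 ∨ q'.2 = q.1 ∨ q'.2 = q.2 then β else 0) := by
    have pne : ∀ {a b c e : Fin m}, a ≠ c → ((a, b) : Fin m × Fin m) ≠ (c, e) :=
      fun h hh => h (congrArg Prod.fst hh)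
    have pne2 : ∀ {a b c e : Fin m}, b ≠ e → ((a, b) : Fin m × Fin m) ≠ (c, e) :=
      fun h hh => h (congrArg Prod.snd hh)
    rintro ⟨j, k⟩ hq ⟨j', k'⟩ hq'
    have hjk : j ≠ k := (hDmem _).1 hq
    have hj'k' : j' ≠ k' := (hDmem _).1 hq'
    by_cases hj'j : j' = j
    · rw [hj'j] at hj'k' ⊢
      by_cases hk'k : k' = k
      · -- q' = q
        rw [hk'k]
        have hint : ∫ ω, Z (j, k) ω * Z (j, k) ω ∂μ = α := by
          rw [hZsq (j, k)]; exact EZ j k hjk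
        rw [hint, if_pos rfl, if_neg (pne hjk), if_pos (Or.inl rfl)]
        linarith
      · -- shared first index j
        have hint : ∫ ω, Z (j, k) ω * Z (j, k') ω ∂μ = β :=
          EZZ3 j k k' hjk hj'k' (fun h => hk'k h.symm)
        rw [hint, if_neg (pne2 hk'k), if_neg (pne hjk), if_pos (Or.inl rfl)]
        linarith
    · by_cases hj'k : j' = k
      · rw [hj'k] at hj'k' ⊢
        by_cases hk'j : k' = j
        · -- q' = swap q
          rw [hk'j]
          have hint : ∫ ω, Z (j, k) ω * Z (k, j) ω ∂μ = α := by
            rw [hZsymm k j, hZsq (j, k)]; exact EZ j k hjk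
          rw [hint, if_neg (pne (Ne.symm hjk)), if_pos rfl, if_pos (Or.inr (Or.inl rfl))]
          linarith
        · -- shared index k
          have hint : ∫ ω, Z (j, k) ω * Z (k, k') ω ∂μ = β := by
            rw [hZsymm j k]
            exact EZZ3 k j k' (Ne.symm hjk) hj'k' (fun h => hk'j h.symm)
          rw [hint, if_neg (pne (Ne.symm hjk)), if_neg (pne2 hk'j),
            if_pos (Or.inr (Or.inl rfl))]
          linarith
      · by_cases hk'j : k' = j
        · -- shared index j (as second coordinate of q')
          rw [hk'j] at hj'k' ⊢
          have hint : ∫ ω, Z (j, k) ω * Z (j', j) ω ∂μ = β := by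
            rw [hZsymm j' j]
            exact EZZ3 j k j' hjk (fun h => hj'k' h.symm) (fun h => hj'k h.symm)
          rw [hint, if_neg (pne hj'j), if_neg (pne hj'k),
            if_pos (Or.inr (Or.inr (Or.inl rfl)))]
          linarith
        · by_cases hk'k : k' = k
          · -- shared index k (as second coordinate of q')
            rw [hk'k] at hj'k' ⊢
            have hint : ∫ ω, Z (j, k) ω * Z (j', k) ω ∂μ = β := by
              rw [hZsymm j k, hZsymm j' k]
              exact EZZ3 k j j' (Ne.symm hjk) (fun h => hj'k' h.symm) (fun h => hj'j h.symm)
            rw [hint, if_neg (pne hj'j), if_neg (pne hj'k),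
              if_pos (Or.inr (Or.inr (Or.inr rfl)))]
            linarith
          · -- all four distinct
            have hint : ∫ ω, Z (j, k) ω * Z (j', k') ω ∂μ = α * α :=
              EZZ4 j k j' k' hjk hj'k' (fun h => hj'j h.symm) (fun h => hk'j h.symm)
                (fun h => hj'k h.symm) (fun h => hk'k h.symm)
            have hc3 : ¬(j' = j ∨ j' = k ∨ k' = j ∨ k' = k) := by
              rintro (h | h | h | h)
              exacts [hj'j h, hj'k h, hk'j h, hk'k h]
            rw [hint, if_neg (pne hj'j), if_neg (pne hj'k), if_neg hc3]
            linarith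
  -- variance of T
  have hZmem : ∀ q : Fin m × Fin m, MemLp (Z q) 2 μ := by
    intro q
    rw [hZind q]
    exact memLp_indicator_const 2 (hAmeas q) 1 (Or.inr (measure_ne_top μ _))
  have hTmem : MemLp T 2 μ := memLp_finset_sum' D fun q _ => hZmem q
  have hTωeq : ∀ ω, T ω = ∑ q ∈ D, Z q ω := by
    intro ω; rw [hT]; simp [Finset.sum_apply]
  have hET : ∫ ω, T ω ∂μ = (D.card : ℝ) * α := by
    calc ∫ ω, T ω ∂μ = ∫ ω, ∑ q ∈ D, Z q ω ∂μ :=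
          integral_congr_ae (Filter.Eventually.of_forall hTωeq)
      _ = ∑ q ∈ D, ∫ ω, Z q ω ∂μ := integral_finset_sum _ fun q _ => hZint q
      _ = ∑ _q ∈ D, α := by
          refine Finset.sum_congr rfl fun q hq => ?_
          obtain ⟨j, k⟩ := q
          exact EZ j k ((hDmem _).1 hq)
      _ = (D.card : ℝ) * α := by rw [Finset.sum_const, nsmul_eq_mul]
  have hT2 : ∫ ω, (T ω) ^ 2 ∂μ = ∑ q ∈ D, ∑ q' ∈ D, ∫ ω, Z q ω * Z q' ω ∂μ := by
    have hpt : ∀ ω, (T ω) ^ 2 = ∑ q ∈ D, ∑ q' ∈ D, Z q ω * Z q' ω := by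
      intro ω; rw [hTωeq, sq, Finset.sum_mul_sum]
    calc ∫ ω, (T ω) ^ 2 ∂μ = ∫ ω, ∑ q ∈ D, ∑ q' ∈ D, Z q ω * Z q' ω ∂μ :=
          integral_congr_ae (Filter.Eventually.of_forall hpt)
      _ = ∑ q ∈ D, ∫ ω, ∑ q' ∈ D, Z q ω * Z q' ω ∂μ :=
          integral_finset_sum _ fun q _ => integrable_finset_sum _ fun q' _ => hZZint q q'
      _ = ∑ q ∈ D, ∑ q' ∈ D, ∫ ω, Z q ω * Z q' ω ∂μ :=
          Finset.sum_congr rfl fun q _ => integral_finset_sum _ fun q' _ => hZZint q q'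
  have hvarT : variance T μ = ∑ q ∈ D, ∑ q' ∈ D, (∫ ω, Z q ω * Z q' ω ∂μ - α * α) := by
    have h1 : variance T μ = ∫ ω, (T ω) ^ 2 ∂μ - (∫ ω, T ω ∂μ) ^ 2 := by
      rw [variance_eq_sub hTmem]
      congr 1
    have h2 : (∫ ω, T ω ∂μ) ^ 2 = ∑ _q ∈ D, ∑ _q' ∈ D, (α * α) := by
      rw [hET]
      simp only [Finset.sum_const, nsmul_eq_mul]
      ring
    rw [h1, hT2, h2, ← Finset.sum_sub_distrib]
    exact Finset.sum_congr rfl fun q _ => (Finset.sum_sub_distrib _ _).symm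
  -- bounding the double sum
  have hinner : ∀ q ∈ D, ∑ q' ∈ D, (∫ ω, Z q ω * Z q' ω ∂μ - α * α)
      ≤ 2 * α + β * (4 * m) := by
    intro q hq
    have step1 : ∑ q' ∈ D, (∫ ω, Z q ω * Z q' ω ∂μ - α * α)
        ≤ ∑ q' ∈ D, ((if q' = q then α else 0) + (if q' = (q.2, q.1) then α else 0) +
          (if q'.1 = q.1 ∨ q'.1 = q.2 ∨ q'.2 = q.1 ∨ q'.2 = q.2 then β else 0)) :=
      Finset.sum_le_sum (key_term q hq)
    have hbnonneg : ∀ q' : Fin m × Fin m,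
        0 ≤ (if q' = q then α else 0) + (if q' = (q.2, q.1) then α else 0) +
          (if q'.1 = q.1 ∨ q'.1 = q.2 ∨ q'.2 = q.1 ∨ q'.2 = q.2 then β else 0) := by
      intro q'
      have h1 : 0 ≤ (if q' = q then α else 0) := by split <;> simp [hα0]
      have h2 : 0 ≤ (if q' = (q.2, q.1) then α else 0) := by split <;> simp [hα0]
      have h3 : 0 ≤ (if q'.1 = q.1 ∨ q'.1 = q.2 ∨ q'.2 = q.1 ∨ q'.2 = q.2 then β else 0) := by
        split <;> simp [hβ0]
      linarith
    have step2 : ∑ q' ∈ D, ((if q' = q then α else 0) + (if q' = (q.2, q.1) then α else 0) +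
          (if q'.1 = q.1 ∨ q'.1 = q.2 ∨ q'.2 = q.1 ∨ q'.2 = q.2 then β else 0))
        ≤ ∑ q' : Fin m × Fin m, ((if q' = q then α else 0) + (if q' = (q.2, q.1) then α else 0) +
          (if q'.1 = q.1 ∨ q'.1 = q.2 ∨ q'.2 = q.1 ∨ q'.2 = q.2 then β else 0)) :=
      Finset.sum_le_sum_of_subset_of_nonneg (Finset.subset_univ D)
        fun q' _ _ => hbnonneg q'
    have e1 : ∑ q' : Fin m × Fin m, (if q' = q then α else 0) = α := by
      rw [Finset.sum_ite_eq' Finset.univ q (fun _ => α)]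
      simp
    have e2 : ∑ q' : Fin m × Fin m, (if q' = (q.2, q.1) then α else 0) = α := by
      rw [Finset.sum_ite_eq' Finset.univ (q.2, q.1) (fun _ => α)]
      simp
    have e3 : ∑ q' : Fin m × Fin m,
        (if q'.1 = q.1 ∨ q'.1 = q.2 ∨ q'.2 = q.1 ∨ q'.2 = q.2 then β else 0) ≤ β * (4 * m) := by
      rw [← Finset.sum_filter]
      rw [Finset.sum_const, nsmul_eq_mul]
      have hsub : Finset.univ.filter
            (fun q' : Fin m × Fin m => q'.1 = q.1 ∨ q'.1 = q.2 ∨ q'.2 = q.1 ∨ q'.2 = q.2)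
          ⊆ (({q.1, q.2} : Finset (Fin m)) ×ˢ Finset.univ) ∪
            (Finset.univ ×ˢ ({q.1, q.2} : Finset (Fin m))) := by
        intro y hy
        simp only [Finset.mem_filter, Finset.mem_univ, true_and] at hy
        simp only [Finset.mem_union, Finset.mem_product, Finset.mem_insert,
          Finset.mem_singleton, Finset.mem_univ, and_true, true_and]
        tauto
      have hcard : (Finset.univ.filter
            (fun q' : Fin m × Fin m => q'.1 = q.1 ∨ q'.1 = q.2 ∨ q'.2 = q.1 ∨ q'.2 = q.2)).card
          ≤ 4 * m := by
        calc _ ≤ ((({q.1, q.2} : Finset (Fin m)) ×ˢ Finset.univ) ∪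
              (Finset.univ ×ˢ ({q.1, q.2} : Finset (Fin m)))).card := Finset.card_le_card hsub
          _ ≤ (({q.1, q.2} : Finset (Fin m)) ×ˢ (Finset.univ : Finset (Fin m))).card +
              ((Finset.univ : Finset (Fin m)) ×ˢ ({q.1, q.2} : Finset (Fin m))).card :=
            Finset.card_union_le _ _
          _ ≤ 4 * m := by
            rw [Finset.card_product, Finset.card_product]
            have h2 : ({q.1, q.2} : Finset (Fin m)).card ≤ 2 :=
              (Finset.card_insert_le _ _).trans (by simp)
            simp only [Finset.card_univ, Fintype.card_fin]
            nlinarith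
      have : ((Finset.univ.filter
            (fun q' : Fin m × Fin m => q'.1 = q.1 ∨ q'.1 = q.2 ∨ q'.2 = q.1 ∨ q'.2 = q.2)).card : ℝ)
          ≤ 4 * m := by exact_mod_cast hcard
      nlinarith
    calc ∑ q' ∈ D, (∫ ω, Z q ω * Z q' ω ∂μ - α * α)
        ≤ ∑ q' : Fin m × Fin m, ((if q' = q then α else 0) + (if q' = (q.2, q.1) then α else 0) +
          (if q'.1 = q.1 ∨ q'.1 = q.2 ∨ q'.2 = q.1 ∨ q'.2 = q.2 then β else 0)) :=
          step1.trans step2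
      _ = α + α + ∑ q' : Fin m × Fin m,
            (if q'.1 = q.1 ∨ q'.1 = q.2 ∨ q'.2 = q.1 ∨ q'.2 = q.2 then β else 0) := by
          rw [Finset.sum_add_distrib, Finset.sum_add_distrib, e1, e2]
      _ ≤ 2 * α + β * (4 * m) := by linarith [e3]
  have hvarTle : variance T μ ≤ (D.card : ℝ) * (2 * α + β * (4 * m)) := by
    rw [hvarT]
    calc ∑ q ∈ D, ∑ q' ∈ D, (∫ ω, Z q ω * Z q' ω ∂μ - α * α)
        ≤ ∑ _q ∈ D, (2 * α + β * (4 * m)) := Finset.sum_le_sum hinner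
      _ = (D.card : ℝ) * (2 * α + β * (4 * m)) := by rw [Finset.sum_const, nsmul_eq_mul]
  -- g is a rescaling of T
  have hgT : g = ((m:ℝ)^2)⁻¹ • T := by
    rw [hg]; funext ω
    simp only [Pi.smul_apply, smul_eq_mul]
    have key : ∑ i : Fin d, (∑ j : Fin m, if x j ω = i then (1:ℝ) else 0) ^ 2
        = m + T ω := by
      have h1 : ∀ i : Fin d, (∑ j : Fin m, if x j ω = i then (1:ℝ) else 0) ^ 2
          = ∑ j : Fin m, ∑ k : Fin m,
              (if x j ω = i then (1:ℝ) else 0) * (if x k ω = i then 1 else 0) := by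
        intro i; rw [sq, Finset.sum_mul_sum]
      rw [Finset.sum_congr rfl fun i _ => h1 i, Finset.sum_comm]
      have h2 : ∀ j : Fin m, ∑ i : Fin d, ∑ k : Fin m,
            (if x j ω = i then (1:ℝ) else 0) * (if x k ω = i then 1 else 0)
          = ∑ k : Fin m, Z (j, k) ω := by
        intro j
        rw [Finset.sum_comm]
        exact Finset.sum_congr rfl fun k _ => (hZsum j k ω).symm
      rw [Finset.sum_congr rfl fun j _ => h2 j]
      have h3 : ∑ j : Fin m, ∑ k : Fin m, Z (j, k) ω
          = ∑ q ∈ (Finset.univ ×ˢ Finset.univ : Finset (Fin m × Fin m)), Z q ω := by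
        rw [Finset.sum_product]
      rw [h3, ← Finset.diag_union_offDiag,
        Finset.sum_union (Finset.disjoint_diag_offDiag _)]
      have h4 : ∑ q ∈ (Finset.univ : Finset (Fin m)).diag, Z q ω = m := by
        have : ∀ q ∈ (Finset.univ : Finset (Fin m)).diag, Z q ω = 1 := by
          intro q hq
          have : q.1 = q.2 := (Finset.mem_diag.1 hq).2
          simp [hZ, this]
        rw [Finset.sum_congr rfl this, Finset.sum_const, Finset.diag_card]
        simp
      rw [h4, hTωeq ω, hD]
    rw [key]
    have hm0 : (m:ℝ) ≠ 0 := ne_of_gt hmpos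
    field_simp
    ring
  have hvarg : variance g μ = (((m:ℝ)^2)⁻¹)^2 * variance T μ := by
    rw [hgT, variance_smul]
  have hEg : ∫ ω, g ω ∂μ = ((m:ℝ)^2)⁻¹ * ((D.card : ℝ) * α) := by
    rw [hgT]
    simp only [Pi.smul_apply, smul_eq_mul]
    rw [integral_const_mul, hET]
  have hNcast : (D.card : ℝ) = (m:ℝ) * (m:ℝ) - (m:ℝ) := by
    have hle : m ≤ m * m := Nat.le_mul_of_pos_left m (by omega)
    rw [hDcard, Nat.cast_sub hle, Nat.cast_mul]
  rw [hvarg, hEg]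
  have hM : (0:ℝ) < (m:ℝ) := hmpos
  calc (((m:ℝ)^2)⁻¹)^2 * variance T μ
      ≤ (((m:ℝ)^2)⁻¹)^2 * ((D.card : ℝ) * (2 * α + β * (4 * m))) :=
        mul_le_mul_of_nonneg_left hvarTle (by positivity)
    _ ≤ 2 / (m:ℝ)^2 * (((m:ℝ)^2)⁻¹ * ((D.card : ℝ) * α)) + 4 / (m:ℝ) * β := by
        rw [hNcast]
        have hm0 : (m:ℝ) ≠ 0 := ne_of_gt hM
        have hdiff : 2 / (m:ℝ)^2 * (((m:ℝ)^2)⁻¹ * (((m:ℝ)*(m:ℝ)-(m:ℝ)) * α)) + 4/(m:ℝ) * β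
            - (((m:ℝ)^2)⁻¹)^2 * (((m:ℝ)*(m:ℝ)-(m:ℝ)) * (2 * α + β * (4 * (m:ℝ))))
            = 4 * β / ((m:ℝ)^2) := by
          field_simp
          ring
        have hpos : 0 ≤ 4 * β / ((m:ℝ)^2) := by positivity
        linarith
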